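/- Let d ≥ 1, and for each j ∈ {1,…,d} let k_j : (0,∞) → ℝ be continuously differentiable with k_j' monotone on some right-neighborhood of 0, such that lim_{t→0+} k_j(t)/(t^{H_j − 1/2} ℓ_j(1/t)) = 1 for some H_j ∈ (0,1) and some slowly varying function ℓ_j : (0,∞) → (0,∞), and such that ∫_1^∞ |k_j'(t)|² dt < ∞. Set K(t) = diag(k_1(t), …, k_d(t)) and H_min = min_j H_j. Then for every T > 0 and every sufficiently small ε > 0 there exists C_{T,ε} > 0 such that for all h ∈ (0, T]: ∫_0^h ‖K(t)‖² dt + ∫_0^T ‖K(t+h) − K(t)‖² dt ≤ C_{T,ε} h^{2 H_min − 2ε}, where ‖·‖ denotes the matrix operator norm. -/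

import Mathlib

set_option maxHeartbeats 1000000
open MeasureTheory Filter Set Matrix intervalIntegral

lemma uct (ℓ : ℝ → ℝ) (hm : Measurable ℓ)
    (hpos : ∀ x : ℝ, 0 < x → 0 < ℓ x)
    (hsv : ∀ lam : ℝ, 0 < lam → Tendsto (fun t => ℓ (lam * t) / ℓ t) atTop (nhds 1))
    (ε : ℝ) (hε : 0 < ε) :
    ∃ X : ℝ, ∀ x ≥ X, ∀ u ∈ Icc (0:ℝ) 1,
      |Real.log (ℓ (Real.exp (x + u))) - Real.log (ℓ (Real.exp x))| ≤ ε := by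
  set f : ℝ → ℝ := fun x => Real.log (ℓ (Real.exp x)) with hf
  by_contra hcon
  push_neg at hcon
  -- build sequences
  have hseq : ∀ n : ℕ, ∃ x ≥ (n:ℝ), ∃ u ∈ Icc (0:ℝ) 1, ε < |f (x + u) - f x| := by
    intro n
    obtain ⟨x, hx, u, hu, h⟩ := hcon n
    exact ⟨x, hx, u, hu, h⟩
  choose x hx u hu hbig using hseq
  have hfm : Measurable f := Real.measurable_log.comp (hm.comp Real.measurable_exp)
  have hxtop : Tendsto x atTop atTop :=
    tendsto_atTop_mono hx tendsto_natCast_atTop_atTop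
  -- pointwise convergence of increments
  have hptw : ∀ (y : ℕ → ℝ), Tendsto y atTop atTop → ∀ v : ℝ,
      Tendsto (fun m => f (y m + v) - f (y m)) atTop (nhds 0) := by
    intro y hy v
    have h1 : Tendsto (fun t => ℓ (Real.exp v * t) / ℓ t) atTop (nhds 1) :=
      hsv _ (Real.exp_pos v)
    have h2 : Tendsto (fun m => Real.exp (y m)) atTop atTop :=
      Real.tendsto_exp_atTop.comp hy
    have h3 : Tendsto (fun m => ℓ (Real.exp v * Real.exp (y m)) / ℓ (Real.exp (y m)))
        atTop (nhds 1) := h1.comp h2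
    have h4 : Tendsto (fun m => Real.log (ℓ (Real.exp v * Real.exp (y m)) / ℓ (Real.exp (y m))))
        atTop (nhds 0) := by
      have := (Real.continuousAt_log (by norm_num : (1:ℝ) ≠ 0)).tendsto.comp h3
      simpa [Function.comp_def] using this
    refine h4.congr (fun m => ?_)
    rw [Real.log_div (ne_of_gt (hpos _ (by positivity))) (ne_of_gt (hpos _ (Real.exp_pos _)))]
    rw [← Real.exp_add, add_comm v (y m)]
  -- E sets
  set E : ℕ → Set ℝ := fun n =>
    Icc (0:ℝ) 2 ∩ ⋂ m : ℕ, {v | n ≤ m → |f (x m + v) - f (x m)| ≤ ε/3} with hE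
  set F : ℕ → Set ℝ := fun n =>
    Icc (0:ℝ) 2 ∩ ⋂ m : ℕ, {v | n ≤ m → |f ((x m + u m) + v) - f (x m + u m)| ≤ ε/3} with hF
  have hmeas : ∀ (c : ℕ → ℝ) (n : ℕ), MeasurableSet
      (Icc (0:ℝ) 2 ∩ ⋂ m : ℕ, {v | n ≤ m → |f (c m + v) - f (c m)| ≤ ε/3}) := by
    intro c n
    refine measurableSet_Icc.inter (MeasurableSet.iInter fun m => ?_)
    by_cases h : n ≤ m
    · simp only [h, forall_true_left]
      have : Measurable (fun v => |f (c m + v) - f (c m)|) :=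
        ((hfm.comp (measurable_const_add _)).sub measurable_const).abs
      exact this measurableSet_Iic
    · simp only [h, false_implies]
      simp [Set.setOf_true]
  have hmeasE : ∀ n, MeasurableSet (E n) := fun n => hmeas x n
  have hmeasF : ∀ n, MeasurableSet (F n) := fun n => hmeas (fun m => x m + u m) n
  have hcover : ∀ (c : ℕ → ℝ), Tendsto c atTop atTop →
      (⋃ n, Icc (0:ℝ) 2 ∩ ⋂ m : ℕ, {v | n ≤ m → |f (c m + v) - f (c m)| ≤ ε/3}) = Icc (0:ℝ) 2 := by
    intro c hc
    apply Subset.antisymm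
    · exact iUnion_subset fun n => inter_subset_left
    · intro v hv
      have := hptw c hc v
      have hev : ∀ᶠ m in atTop, |f (c m + v) - f (c m)| ≤ ε/3 := by
        have h0 : Tendsto (fun m => |f (c m + v) - f (c m)|) atTop (nhds 0) := by
          simpa using this.abs
        exact h0.eventually_le_const (by positivity : (0:ℝ) < ε/3)
      obtain ⟨n, hn⟩ := eventually_atTop.mp hev
      exact mem_iUnion.mpr ⟨n, hv, mem_iInter.mpr fun m => fun hm => hn m hm⟩
  have hmonoE : ∀ (c : ℕ → ℝ), Monotone (fun n =>
      Icc (0:ℝ) 2 ∩ ⋂ m : ℕ, {v | n ≤ m → |f (c m + v) - f (c m)| ≤ ε/3}) := by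
    intro c n n' hnn'
    refine inter_subset_inter_right _ (iInter_mono fun m => ?_)
    intro v hv hm
    exact hv (le_trans hnn' hm)
  have hTendE : Tendsto (fun n => volume (E n)) atTop (nhds (ENNReal.ofReal 2)) := by
    have := tendsto_measure_iUnion_atTop (μ := volume) (hmonoE x)
    rw [hcover x hxtop] at this
    simpa [Real.volume_Icc, Function.comp_def] using this
  have hTendF : Tendsto (fun n => volume (F n)) atTop (nhds (ENNReal.ofReal 2)) := by
    have hxu : Tendsto (fun m => x m + u m) atTop atTop := by
      apply tendsto_atTop_mono (fun m => ?_) hxtop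
      have := (hu m).1
      linarith
    have := tendsto_measure_iUnion_atTop (μ := volume) (hmonoE (fun m => x m + u m))
    rw [hcover _ hxu] at this
    simpa [Real.volume_Icc, Function.comp_def] using this
  have hlt : ENNReal.ofReal (7/4) < ENNReal.ofReal 2 := by
    rw [ENNReal.ofReal_lt_ofReal_iff (by norm_num)]; norm_num
  obtain ⟨N, hEN, hFN⟩ := ((hTendE.eventually_const_lt hlt).and
    (hTendF.eventually_const_lt hlt)).exists
  -- translate F N
  set B : Set ℝ := (fun h => -(u N) + h) ⁻¹' (F N) with hB
  have hmeasB : MeasurableSet B := (hmeasF N).preimage (measurable_const_add _)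
  have hvolB : volume B = volume (F N) := measure_preimage_add volume _ _
  have hsub : E N ∪ B ⊆ Icc (0:ℝ) 3 := by
    rintro y (hy | hy)
    · have := hy.1
      exact ⟨this.1, le_trans this.2 (by norm_num)⟩
    · have h1 : -(u N) + y ∈ Icc (0:ℝ) 2 := hy.1
      have h2 := (hu N).1
      have h3 := (hu N).2
      constructor <;> [linarith [h1.1]; linarith [h1.2]]
  have hne : (E N ∩ B).Nonempty := by
    by_contra hemp
    rw [not_nonempty_iff_eq_empty] at hemp
    have hdisj : Disjoint (E N) B := disjoint_iff_inter_eq_empty.mpr hemp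
    have h1 : volume (E N ∪ B) = volume (E N) + volume B :=
      measure_union hdisj hmeasB
    have h2 : volume (E N ∪ B) ≤ ENNReal.ofReal 3 := by
      calc volume (E N ∪ B) ≤ volume (Icc (0:ℝ) 3) := measure_mono hsub
        _ = ENNReal.ofReal 3 := by rw [Real.volume_Icc]; norm_num
    have h3 : ENNReal.ofReal (7/2) < volume (E N) + volume B := by
      calc ENNReal.ofReal (7/2) = ENNReal.ofReal (7/4) + ENNReal.ofReal (7/4) := by
            rw [← ENNReal.ofReal_add (by norm_num) (by norm_num)]; norm_num
        _ < volume (E N) + volume B := by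
            rw [hvolB]; exact ENNReal.add_lt_add hEN hFN
    rw [← h1] at h3
    have h4 : ENNReal.ofReal 3 ≤ ENNReal.ofReal (7/2) := ENNReal.ofReal_le_ofReal (by norm_num)
    exact absurd (lt_of_lt_of_le h3 (le_trans h2 h4)) (lt_irrefl _)
  obtain ⟨y, hyE, hyB⟩ := hne
  have hy1 : |f (x N + y) - f (x N)| ≤ ε/3 := by
    have := hyE.2
    rw [mem_iInter] at this
    exact this N le_rfl
  have hy2 : |f ((x N + u N) + (-(u N) + y)) - f (x N + u N)| ≤ ε/3 := by
    have := hyB.2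
    rw [mem_iInter] at this
    exact this N le_rfl
  have heq : (x N + u N) + (-(u N) + y) = x N + y := by ring
  rw [heq] at hy2
  have : |f (x N + u N) - f (x N)| ≤ 2 * (ε/3) := by
    have := abs_sub (f (x N + u N)) (f (x N))
    calc |f (x N + u N) - f (x N)|
        = |(f (x N + u N) - f (x N + y)) + (f (x N + y) - f (x N))| := by ring_nf
      _ ≤ |f (x N + u N) - f (x N + y)| + |f (x N + y) - f (x N)| := abs_add_le _ _
      _ ≤ ε/3 + ε/3 := add_le_add (by rw [abs_sub_comm]; exact hy2) hy1
      _ = 2 * (ε/3) := by ring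
  have := hbig N
  linarith

lemma potter (ℓ : ℝ → ℝ) (hm : Measurable ℓ)
    (hpos : ∀ x : ℝ, 0 < x → 0 < ℓ x)
    (hsv : ∀ lam : ℝ, 0 < lam → Tendsto (fun t => ℓ (lam * t) / ℓ t) atTop (nhds 1))
    (ε : ℝ) (hε : 0 < ε) :
    ∃ C > 0, ∃ X ≥ 1, ∀ x ≥ X, ℓ x ≤ C * x ^ ε := by
  obtain ⟨X, hX⟩ := uct ℓ hm hpos hsv ε hε
  set f : ℝ → ℝ := fun x => Real.log (ℓ (Real.exp x)) with hf
  have key : ∀ x ≥ X, ∀ u ∈ Icc (0:ℝ) 1, f (x + u) ≤ f x + ε := by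
    intro x hx u hu
    have := hX x hx u hu
    have := abs_le.mp this
    linarith [this.2]
  have claim : ∀ n : ℕ, ∀ u ∈ Icc (0:ℝ) 1, f (X + n + u) ≤ f X + (n + 1) * ε := by
    intro n
    induction n with
    | zero => intro u hu; simpa using key X le_rfl u hu
    | succ n ih =>
      intro u hu
      have h1 : X + (n + 1 : ℕ) + u = (X + n + u) + 1 := by push_cast; ring
      have h2 : f ((X + n + u) + 1) ≤ f (X + n + u) + ε :=
        key (X + n + u) (by have h := hu.1; have : (0:ℝ) ≤ (n:ℝ) := Nat.cast_nonneg n; linarith) 1 (by norm_num)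
      have h3 := ih u hu
      rw [h1]
      push_cast
      linarith
  refine ⟨Real.exp (f X + (1 - X) * ε), Real.exp_pos _, max 1 (Real.exp X),
    le_max_left _ _, fun y hy => ?_⟩
  have hy1 : (1:ℝ) ≤ y := le_trans (le_max_left _ _) hy
  have hy0 : (0:ℝ) < y := lt_of_lt_of_le one_pos hy1
  have hylog : X ≤ Real.log y := by
    have := Real.log_le_log (Real.exp_pos X) (le_trans (le_max_right _ _) hy)
    rwa [Real.log_exp] at this
  set z := Real.log y - X with hz
  have hz0 : 0 ≤ z := by simp [hz]; linarith
  set n := ⌊z⌋₊ with hn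
  have hnum : (n:ℝ) ≤ z := Nat.floor_le hz0
  have hnum2 : z < n + 1 := Nat.lt_floor_add_one z
  have hbound : f (Real.log y) ≤ f X + (z + 1) * ε := by
    have heq : Real.log y = X + n + (z - n) := by rw [hz]; ring
    have := claim n (z - n) ⟨by linarith, by linarith⟩
    rw [heq]
    calc f (X + ↑n + (z - ↑n)) ≤ f X + (↑n + 1) * ε := this
      _ ≤ f X + (z + 1) * ε := by nlinarith
  have hfl : f (Real.log y) = Real.log (ℓ y) := by
    simp [hf, Real.exp_log hy0]
  have : Real.log (ℓ y) ≤ f X + (Real.log y - X + 1) * ε := by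
    rw [← hfl]; simpa [hz] using hbound
  have hexp := Real.exp_le_exp.mpr this
  rw [Real.exp_log (hpos y hy0)] at hexp
  calc ℓ y ≤ Real.exp (f X + (Real.log y - X + 1) * ε) := hexp
    _ = Real.exp (f X + (1 - X) * ε) * y ^ ε := by
        rw [Real.rpow_def_of_pos hy0, ← Real.exp_add]; ring_nf

lemma rpow_integrableOn (p b : ℝ) (hp : -1 < p) (hb : 0 ≤ b) :
    IntegrableOn (fun t : ℝ => t ^ p) (Ioc 0 b) volume := by
  have := (intervalIntegral.intervalIntegrable_rpow' (a := 0) (b := b) hp)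
  rw [intervalIntegrable_iff] at this
  rwa [Set.uIoc_of_le hb] at this

lemma rpow_integral_Ioc (p b : ℝ) (hp : -1 < p) (hb : 0 ≤ b) :
    ∫ t in Ioc (0:ℝ) b, t ^ p = b ^ (p + 1) / (p + 1) := by
  rw [← intervalIntegral.integral_of_le hb, integral_rpow (Or.inl hp)]
  rw [Real.zero_rpow (by linarith)]
  ring

lemma rpow_tail_bound (p a b : ℝ) (hp : p + 1 < 0) (ha : 0 < a) (hab : a ≤ b) :
    ∫ t in Ioc a b, t ^ p ≤ a ^ (p + 1) / (-(p + 1)) := by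
  rw [← intervalIntegral.integral_of_le hab, integral_rpow
    (Or.inr ⟨by intro h; rw [h] at hp; norm_num at hp, by
      rw [Set.uIcc_of_le hab]; intro hmem; exact absurd hmem.1 (not_le.mpr ha)⟩)]
  have hb : (0:ℝ) ≤ b ^ (p+1) := Real.rpow_nonneg (by linarith) _
  have h1 : (b ^ (p + 1) - a ^ (p + 1)) / (p + 1) = (a ^ (p+1) - b ^ (p+1)) / (-(p+1)) := by
    rw [div_neg, ← neg_div, neg_sub]
  rw [h1]
  apply div_le_div_of_nonneg_right ?_ (by linarith)
  linarith


lemma sq_integrableOn (k : ℝ → ℝ) (hc : ContinuousOn k (Ioi 0))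
    (C δ β : ℝ) (hδ : 0 < δ) (hβ : -1 < 2*β)
    (hkb : ∀ t ∈ Ioc (0:ℝ) δ, |k t| ≤ C * t ^ β)
    (b : ℝ) (hb : 0 < b) :
    IntegrableOn (fun t => (k t)^2) (Ioc 0 b) volume := by
  have hCnn : 0 ≤ C := by
    have := hkb δ ⟨hδ, le_refl δ⟩
    have h2 : (0:ℝ) < δ ^ β := Real.rpow_pos_of_pos hδ β
    nlinarith [abs_nonneg (k δ)]
  have hcsq : ContinuousOn (fun t => (k t)^2) (Ioi 0) := (hc.pow 2)
  set m := min δ b with hm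
  have hm0 : 0 < m := lt_min hδ hb
  have h1 : IntegrableOn (fun t => (k t)^2) (Ioc 0 m) volume := by
    refine Integrable.mono' (g := fun t => C^2 * t ^ (2*β)) ?_ ?_ ?_
    · exact ((rpow_integrableOn (2*β) m hβ hm0.le).const_mul _)
    · exact (hcsq.mono (fun t ht => ht.1)).aestronglyMeasurable measurableSet_Ioc
    · rw [ae_restrict_iff' measurableSet_Ioc]
      refine Filter.Eventually.of_forall (fun t ht => ?_)
      have ht0 : 0 < t := ht.1
      have htδ : t ∈ Ioc (0:ℝ) δ := ⟨ht.1, le_trans ht.2 (min_le_left _ _)⟩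
      have hb1 := hkb t htδ
      have h2 : t ^ (2*β) = t ^ β * t ^ β := by
        rw [← Real.rpow_add ht0]; ring_nf
      have h3 : ‖(k t)^2‖ = |k t| * |k t| := by
        rw [Real.norm_eq_abs, abs_pow, sq]
      show ‖(k t)^2‖ ≤ C^2 * t ^ (2*β)
      rw [h3, h2]
      have h4 : (0:ℝ) ≤ t ^ β := Real.rpow_nonneg ht0.le β
      calc |k t| * |k t| ≤ (C * t ^ β) * (C * t ^ β) :=
            mul_le_mul hb1 hb1 (abs_nonneg _) (by positivity)
        _ = C^2 * (t ^ β * t ^ β) := by ring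
  rcases le_or_gt b m with hbm | hmb
  · exact h1.mono_set (Ioc_subset_Ioc le_rfl hbm)
  · have h2 : IntegrableOn (fun t => (k t)^2) (Ioc m b) volume := by
      refine (ContinuousOn.integrableOn_compact isCompact_Icc ?_).mono_set Ioc_subset_Icc_self
      exact hcsq.mono (fun t ht => lt_of_lt_of_le hm0 ht.1)
    have := h1.union h2
    rwa [Ioc_union_Ioc_eq_Ioc hm0.le hmb.le] at this

lemma small_int_bound (k : ℝ → ℝ) (hc : ContinuousOn k (Ioi 0))
    (C δ β : ℝ) (hδ : 0 < δ) (hβ : -1 < 2*β) (hC : 0 ≤ C)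
    (hkb : ∀ t ∈ Ioc (0:ℝ) δ, |k t| ≤ C * t ^ β)
    (b : ℝ) (hb : 0 < b) (hbδ : b ≤ δ) :
    ∫ t in Ioc (0:ℝ) b, (k t)^2 ≤ C^2 / (2*β + 1) * b ^ (2*β + 1) := by
  have key : ∫ t in Ioc (0:ℝ) b, (k t)^2 ≤ ∫ t in Ioc (0:ℝ) b, C^2 * t ^ (2*β) := by
    refine integral_mono_of_nonneg ?_ ((rpow_integrableOn (2*β) b hβ hb.le).const_mul _) ?_
    · exact Filter.Eventually.of_forall (fun t => sq_nonneg _)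
    · rw [Filter.EventuallyLE, ae_restrict_iff' measurableSet_Ioc]
      refine Filter.Eventually.of_forall (fun t ht => ?_)
      have ht0 : 0 < t := ht.1
      have hb1 := hkb t ⟨ht.1, le_trans ht.2 hbδ⟩
      have h2 : t ^ (2*β) = t ^ β * t ^ β := by rw [← Real.rpow_add ht0]; ring_nf
      have h4 : (0:ℝ) ≤ t ^ β := Real.rpow_nonneg ht0.le β
      have h5 : (k t)^2 ≤ (C * t ^ β)^2 := sq_le_sq' (by nlinarith [abs_le.mp hb1]) (by nlinarith [abs_le.mp hb1])
      calc (k t)^2 ≤ (C * t ^ β)^2 := h5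
        _ = C^2 * (t ^ β * t ^ β) := by ring
        _ = C^2 * t ^ (2*β) := by rw [← h2]
  rw [MeasureTheory.integral_const_mul, rpow_integral_Ioc (2*β) b hβ hb.le] at key
  calc ∫ t in Ioc (0:ℝ) b, (k t)^2 ≤ C^2 * (b ^ (2*β+1)/(2*β+1)) := key
    _ = C^2/(2*β+1) * b ^ (2*β+1) := by ring

lemma deriv_bound (k : ℝ → ℝ) (hkc : ContDiffOn ℝ 1 k (Ioi 0))
    (δm : ℝ) (hδm : 0 < δm)
    (hmono : MonotoneOn (deriv k) (Ioc 0 δm) ∨ AntitoneOn (deriv k) (Ioc 0 δm))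
    (C δ β : ℝ) (hC : 0 ≤ C) (hδ : 0 < δ) (hβl : -1 ≤ β) (hβu : β ≤ 1)
    (hkb : ∀ t ∈ Ioc (0:ℝ) δ, |k t| ≤ C * t ^ β) :
    ∃ δ' > 0, δ' ≤ δ ∧ ∀ t ∈ Ioc (0:ℝ) δ', |deriv k t| ≤ 9*C * t ^ (β - 1) := by
  refine ⟨min δm δ / 2, by positivity, by
    have := min_le_right δm δ; linarith [lt_min hδm hδ], fun t ht => ?_⟩
  obtain ⟨ht0, htδ'⟩ := ht
  have htm : 2*t ≤ min δm δ := by linarith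
  have htδm : 2*t ≤ δm := le_trans htm (min_le_left _ _)
  have htδδ : 2*t ≤ δ := le_trans htm (min_le_right _ _)
  have hdiff : DifferentiableOn ℝ k (Ioi 0) := hkc.differentiableOn one_ne_zero
  have hder : ∀ s : ℝ, 0 < s → HasDerivAt k (deriv k s) s := fun s hs =>
    (hdiff.differentiableAt (Ioi_mem_nhds hs)).hasDerivAt
  have hcont : ContinuousOn k (Ioi 0) := hkc.continuousOn
  -- MVT on [t/2, t]
  obtain ⟨c₁, hc₁mem, hc₁⟩ := exists_hasDerivAt_eq_slope k (deriv k)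
    (by linarith : t/2 < t)
    (hcont.mono (fun s hs => lt_of_lt_of_le (by linarith [hs.1] : (0:ℝ) < s) le_rfl))
    (fun s hs => hder s (by linarith [hs.1]))
  obtain ⟨c₂, hc₂mem, hc₂⟩ := exists_hasDerivAt_eq_slope k (deriv k)
    (by linarith : t < 2*t)
    (hcont.mono (fun s hs => by simp only [mem_Ioi]; linarith [hs.1]))
    (fun s hs => hder s (by linarith [hs.1]))
  -- bounds on the slopes
  have htpow : (0:ℝ) < t ^ β := Real.rpow_pos_of_pos ht0 β
  have hkt : |k t| ≤ C * t ^ β := hkb t ⟨ht0, by linarith⟩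
  have hk2t : |k (2*t)| ≤ 2*C * t ^ β := by
    have h1 := hkb (2*t) ⟨by linarith, htδδ⟩
    have h2 : (2*t) ^ β = 2 ^ β * t ^ β := Real.mul_rpow (by norm_num) ht0.le
    have h3 : (2:ℝ) ^ β ≤ 2 := by
      calc (2:ℝ) ^ β ≤ 2 ^ (1:ℝ) := Real.rpow_le_rpow_of_exponent_le (by norm_num) hβu
        _ = 2 := Real.rpow_one 2
    calc |k (2*t)| ≤ C * ((2:ℝ) ^ β * t ^ β) := by rwa [h2] at h1
      _ ≤ 2*C * t ^ β := by nlinarith [mul_nonneg hC htpow.le, Real.rpow_pos_of_pos (show (0:ℝ)<2 by norm_num) β]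
  have hkht : |k (t/2)| ≤ 2*C * t ^ β := by
    have h1 := hkb (t/2) ⟨by linarith, by linarith⟩
    have h2 : (t/2) ^ β = t ^ β * (2:ℝ) ^ (-β) := by
      rw [Real.div_rpow ht0.le (by norm_num), Real.rpow_neg (by norm_num), div_eq_mul_inv]
    have h3 : (2:ℝ) ^ (-β) ≤ 2 := by
      calc (2:ℝ) ^ (-β) ≤ 2 ^ (1:ℝ) := Real.rpow_le_rpow_of_exponent_le (by norm_num) (by linarith)
        _ = 2 := Real.rpow_one 2
    calc |k (t/2)| ≤ C * (t ^ β * (2:ℝ)^(-β)) := by rwa [h2] at h1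
      _ ≤ 2*C * t ^ β := by nlinarith [mul_nonneg hC htpow.le, Real.rpow_pos_of_pos (show (0:ℝ)<2 by norm_num) (-β)]
  have hpow1 : t ^ β / t = t ^ (β - 1) := by
    rw [Real.rpow_sub ht0, Real.rpow_one]
  have hq1 : |(k t - k (t/2)) / (t - t/2)| ≤ 6*C * t ^ (β-1) := by
    rw [abs_div]
    have h1 : |t - t/2| = t/2 := by rw [abs_of_pos (by linarith)]; ring_nf
    rw [h1, div_le_iff₀ (by linarith)]
    have h2 : |k t - k (t/2)| ≤ 3*C*t ^ β := by
      calc |k t - k (t/2)| ≤ |k t| + |k (t/2)| := abs_sub _ _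
        _ ≤ 3*C*t ^ β := by linarith
    calc |k t - k (t/2)| ≤ 3*C*t ^ β := h2
      _ = 6*C * (t ^ β / t) * (t/2) := by field_simp; ring
      _ = 6*C * t ^ (β-1) * (t/2) := by rw [hpow1]
  have hq2 : |(k (2*t) - k t) / (2*t - t)| ≤ 3*C * t ^ (β-1) := by
    rw [abs_div]
    have h1 : |2*t - t| = t := by rw [abs_of_pos (by linarith)]; ring_nf
    rw [h1, div_le_iff₀ ht0]
    have h2 : |k (2*t) - k t| ≤ 3*C*t ^ β := by
      calc |k (2*t) - k t| ≤ |k (2*t)| + |k t| := abs_sub _ _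
        _ ≤ 3*C*t ^ β := by linarith
    calc |k (2*t) - k t| ≤ 3*C*t ^ β := h2
      _ = 3*C * (t ^ β / t) * t := by field_simp
      _ = 3*C * t ^ (β-1) * t := by rw [hpow1]
  -- memberships in Ioc 0 δm
  have hc₁m : c₁ ∈ Ioc (0:ℝ) δm := ⟨by linarith [hc₁mem.1], by linarith [hc₁mem.2]⟩
  have htm' : t ∈ Ioc (0:ℝ) δm := ⟨ht0, by linarith⟩
  have hc₂m : c₂ ∈ Ioc (0:ℝ) δm := ⟨by linarith [hc₂mem.1], by linarith [hc₂mem.2]⟩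
  have habs : ∀ x q₁ q₂ : ℝ, q₁ ≤ x → x ≤ q₂ → |q₁| ≤ 6*C*t ^ (β-1) →
      |q₂| ≤ 6*C*t ^ (β-1) → |x| ≤ 9*C*t ^ (β-1) := by
    intro x q₁ q₂ h1 h2 h3 h4
    have h5 := neg_abs_le q₁
    have h6 := le_abs_self q₂
    have h9 : (0:ℝ) ≤ C * t ^ (β - 1) := by positivity
    rw [abs_le]
    constructor <;> nlinarith
  rcases hmono with hmon | hant
  · have h1 : deriv k c₁ ≤ deriv k t := hmon hc₁m htm' (le_of_lt hc₁mem.2)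
    have h2 : deriv k t ≤ deriv k c₂ := hmon htm' hc₂m (le_of_lt hc₂mem.1)
    rw [hc₁] at h1; rw [hc₂] at h2
    exact habs _ _ _ h1 h2 hq1 (le_trans hq2 (by nlinarith [Real.rpow_pos_of_pos ht0 (β-1)]))
  · have h1 : deriv k c₂ ≤ deriv k t := hant htm' hc₂m (le_of_lt hc₂mem.1)
    have h2 : deriv k t ≤ deriv k c₁ := hant hc₁m htm' (le_of_lt hc₁mem.2)
    rw [hc₂] at h1; rw [hc₁] at h2
    exact habs _ _ _ h1 h2 (le_trans hq2 (by nlinarith [Real.rpow_pos_of_pos ht0 (β-1)])) hq1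

lemma translate_int (k : ℝ → ℝ) (h b : ℝ) (hb : 0 ≤ b) :
    ∫ t in Ioc (0:ℝ) b, (k (t+h))^2 = ∫ t in Ioc h (b + h), (k t)^2 := by
  rw [← intervalIntegral.integral_of_le hb, ← intervalIntegral.integral_of_le (by linarith : h ≤ b + h)]
  have := intervalIntegral.integral_comp_add_right (a := 0) (b := b) (fun s => (k s) ^ 2) h
  rw [show (0:ℝ)+h = h by ring, show b+h = b+h from rfl] at this
  exact this

lemma translate_intg (k : ℝ → ℝ) (h b : ℝ) (hb : 0 ≤ b) (hh : 0 ≤ h)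
    (hint : IntegrableOn (fun t => (k t)^2) (Ioc h (b + h)) volume) :
    IntegrableOn (fun t => (k (t+h))^2) (Ioc 0 b) volume := by
  have h1 : IntervalIntegrable (fun t => (k t)^2) volume h (b + h) := by
    rw [intervalIntegrable_iff, uIoc_of_le (by linarith)]; exact hint
  have h2 := h1.comp_add_right h
  rw [intervalIntegrable_iff] at h2
  rw [show h - h = (0:ℝ) by ring, show b + h - h = b by ring, uIoc_of_le hb] at h2
  exact h2
lemma sq_sub_le (a b : ℝ) : (a - b)^2 ≤ 2*a^2 + 2*b^2 := by
  nlinarith [sq_nonneg (a+b)]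

lemma component (k : ℝ → ℝ) (H ε T α : ℝ)
    (hH : H ∈ Ioo (0:ℝ) 1)
    (hkc : ContDiffOn ℝ 1 k (Ioi 0))
    (δm : ℝ) (hδm : 0 < δm)
    (hmono : MonotoneOn (deriv k) (Ioc 0 δm) ∨ AntitoneOn (deriv k) (Ioc 0 δm))
    (hT : 0 < T) (hε : 0 < ε) (hεH : ε < H)
    (hα0 : 0 < α) (hα : α ≤ 2*H - 2*ε)
    (C δ : ℝ) (hC : 0 < C) (hδ0 : 0 < δ) (hδ1 : δ ≤ 1)
    (hkb : ∀ t ∈ Ioc (0:ℝ) δ, |k t| ≤ C * t ^ (H - 1/2 - ε/2)) :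
    ∃ D > 0, ∀ h : ℝ, 0 < h → h ≤ T →
      IntegrableOn (fun t => (k t)^2) (Ioc 0 h) volume ∧
      IntegrableOn (fun t => (k (t+h) - k t)^2) (Ioc 0 T) volume ∧
      (∫ t in Ioc (0:ℝ) h, (k t)^2) + (∫ t in Ioc (0:ℝ) T, (k (t+h) - k t)^2) ≤ D * h ^ α := by
  obtain ⟨hH0, hH1⟩ := hH
  set β := H - 1/2 - ε/2 with hβdef
  have hβ2 : -1 < 2*β := by simp only [hβdef]; linarith
  have hβl : (-1:ℝ) ≤ β := by simp only [hβdef]; linarith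
  have hβu : β ≤ 1 := by simp only [hβdef]; linarith
  have hβ1pos : 0 < 2*β + 1 := by linarith
  have hβ1lt : 2*β - 1 < 0 := by simp only [hβdef]; linarith
  have hαsmall : α ≤ 2*β + 1 := by simp only [hβdef]; linarith
  have hα2 : α ≤ 2 := by linarith
  have hcont : ContinuousOn k (Ioi 0) := hkc.continuousOn
  have hdc : ContinuousOn (deriv k) (Ioi 0) :=
    hkc.continuousOn_deriv_of_isOpen isOpen_Ioi le_rfl
  have hdiffb : DifferentiableOn ℝ k (Ioi 0) := hkc.differentiableOn one_ne_zero
  have hder : ∀ s : ℝ, 0 < s → HasDerivAt k (deriv k s) s := fun s hs =>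
    (hdiffb.differentiableAt (Ioi_mem_nhds hs)).hasDerivAt
  obtain ⟨δ', hδ'0, hδ'δ, hdb⟩ := deriv_bound k hkc δm hδm hmono C δ β hC.le hδ0 hβl hβu hkb
  set η := min δ' T / 2 with hηdef
  have hη0 : 0 < η := by have := lt_min hδ'0 hT; positivity
  have hηδ' : 2*η ≤ δ' := by have := min_le_left δ' T; simp only [hηdef]; linarith
  have hηT : 2*η ≤ T := by have := min_le_right δ' T; simp only [hηdef]; linarith
  have hη1 : η ≤ 1 := by linarith [hδ'δ]
  set a := η / 3 with hadef
  have ha0 : 0 < a := by positivity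
  -- bound for deriv on [η, 2T]
  obtain ⟨M', hM'⟩ := IsCompact.exists_bound_of_continuousOn (isCompact_Icc (a := η) (b := 2*T))
    (hdc.mono (fun s hs => lt_of_lt_of_le hη0 hs.1))
  have hM'0 : 0 ≤ M' := le_trans (norm_nonneg _) (hM' η ⟨le_rfl, by linarith⟩)
  -- global integral
  have hI2T : IntegrableOn (fun t => (k t)^2) (Ioc 0 (2*T)) volume :=
    sq_integrableOn k hcont C δ β hδ0 hβ2 hkb (2*T) (by linarith)
  set M₂ := ∫ t in Ioc (0:ℝ) (2*T), (k t)^2 with hM₂def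
  have hM₂0 : 0 ≤ M₂ := integral_nonneg_of_ae (Filter.Eventually.of_forall (fun t => sq_nonneg _))
  -- constants
  set B₁ := 36 * (C^2/(2*β+1)) with hB₁def
  set B₂ := 81*C^2 / (-(2*β-1)) with hB₂def
  set B₃ := T * M'^2 with hB₃def
  set B₄ := 4*M₂/a ^ α with hB₄def
  set A := C^2/(2*β+1) + M₂/δ ^ α with hAdef
  have hB₁0 : 0 < B₁ := by simp only [hB₁def]; positivity
  have hB₂0 : 0 < B₂ := by
    simp only [hB₂def]
    apply div_pos (by positivity) (by linarith)
  have hB₃0 : 0 ≤ B₃ := by simp only [hB₃def]; positivity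
  have hB₄0 : 0 ≤ B₄ := by simp only [hB₄def]; positivity
  have hA0 : 0 < A := by
    simp only [hAdef]
    have : 0 < C^2/(2*β+1) := by positivity
    have h2 : 0 ≤ M₂/δ ^ α := by positivity
    linarith
  refine ⟨A + (B₁ + B₂ + B₃ + B₄), by linarith, fun h hh0 hhT => ?_⟩
  have hIk : IntegrableOn (fun t => (k t)^2) (Ioc 0 h) volume :=
    sq_integrableOn k hcont C δ β hδ0 hβ2 hkb h hh0
  have hIkT : IntegrableOn (fun t => (k t)^2) (Ioc 0 T) volume :=
    hI2T.mono_set (Ioc_subset_Ioc le_rfl (by linarith))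
  have hIksh : IntegrableOn (fun t => (k (t+h))^2) (Ioc 0 T) volume := by
    apply translate_intg k h T hT.le hh0.le
    exact hI2T.mono_set (Ioc_subset_Ioc hh0.le (by linarith))
  have hcsh : ContinuousOn (fun t => k (t+h)) (Ioc (0:ℝ) T) := by
    refine ContinuousOn.comp hcont (Continuous.continuousOn (by continuity)) ?_
    intro t ht
    simp only [mem_Ioi]
    exact add_pos ht.1 hh0
  have hcinc : ContinuousOn (fun t => (k (t+h) - k t)^2) (Ioc (0:ℝ) T) :=
    (hcsh.sub (hcont.mono (fun t ht => ht.1))).pow 2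
  have hImeas : AEStronglyMeasurable (fun t => (k (t+h) - k t)^2)
      (volume.restrict (Ioc (0:ℝ) T)) :=
    hcinc.aestronglyMeasurable measurableSet_Ioc
  have hgint : IntegrableOn (fun t => 2*(k (t+h))^2 + 2*(k t)^2) (Ioc 0 T) volume :=
    (hIksh.const_mul 2).add (hIkT.const_mul 2)
  have hIinc : IntegrableOn (fun t => (k (t+h) - k t)^2) (Ioc 0 T) volume := by
    refine Integrable.mono' hgint hImeas ?_
    refine Filter.Eventually.of_forall (fun t => ?_)
    rw [Real.norm_eq_abs, abs_of_nonneg (sq_nonneg _)]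
    exact sq_sub_le _ _
  refine ⟨hIk, hIinc, ?_⟩
  have hpowpos : 0 < h ^ α := Real.rpow_pos_of_pos hh0 α
  have partA : ∫ t in Ioc (0:ℝ) h, (k t)^2 ≤ A * h ^ α := by
    rcases le_or_gt h δ with hhδ | hhδ
    · have h1 := small_int_bound k hcont C δ β hδ0 hβ2 hC.le hkb h hh0 hhδ
      have h2 : h ^ (2*β+1) ≤ h ^ α :=
        Real.rpow_le_rpow_of_exponent_ge hh0 (by linarith) hαsmall
      calc ∫ t in Ioc (0:ℝ) h, (k t)^2 ≤ C^2/(2*β+1) * h ^ (2*β+1) := h1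
        _ ≤ C^2/(2*β+1) * h ^ α := mul_le_mul_of_nonneg_left h2 (by positivity)
        _ ≤ A * h ^ α := by
            apply mul_le_mul_of_nonneg_right ?_ hpowpos.le
            simp only [hAdef]
            have h3 : 0 ≤ M₂/δ ^ α := by positivity
            linarith
    · have h1 : ∫ t in Ioc (0:ℝ) h, (k t)^2 ≤ M₂ := by
        apply setIntegral_mono_set hI2T
        · exact Filter.Eventually.of_forall (fun t => sq_nonneg _)
        · exact (Ioc_subset_Ioc le_rfl (by linarith)).eventuallyLE
      have h2 : δ ^ α ≤ h ^ α := Real.rpow_le_rpow hδ0.le hhδ.le hα0.le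
      have hδp : 0 < δ ^ α := Real.rpow_pos_of_pos hδ0 α
      have h3 : M₂ ≤ M₂ / δ ^ α * h ^ α := by
        rw [div_mul_eq_mul_div, le_div_iff₀ hδp]
        exact mul_le_mul_of_nonneg_left h2 hM₂0
      calc ∫ t in Ioc (0:ℝ) h, (k t)^2 ≤ M₂ := h1
        _ ≤ M₂/δ ^ α * h ^ α := h3
        _ ≤ A * h ^ α := by
            apply mul_le_mul_of_nonneg_right ?_ hpowpos.le
            simp only [hAdef]
            have h4 : 0 ≤ C^2/(2*β+1) := by positivity
            linarith
  have hh1 : h ≤ 1 ∨ a < h := by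
    rcases le_or_gt h a with hc | hc
    · left; have : a ≤ 1 := by simp only [hadef]; linarith
      linarith
    · right; exact hc
  have partB : ∫ t in Ioc (0:ℝ) T, (k (t+h) - k t)^2 ≤ (B₁ + B₂ + B₃ + B₄) * h ^ α := by
    rcases le_or_gt h a with hha | hha
    · -- SMALL h
      have hsmall1 : h ≤ 1 := by simp only [hadef] at hha; linarith
      have h2hη : 2*h ≤ η := by simp only [hadef] at hha; linarith
      have h3hη : 3*h ≤ η := by simp only [hadef] at hha; linarith
      have hηT' : η ≤ T := by linarith
      have hηδ : η ≤ δ := by linarith [hδ'δ]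
      -- splitting
      have hint1 : IntegrableOn (fun t => (k (t+h) - k t)^2) (Ioc 0 (2*h)) volume :=
        hIinc.mono_set (Ioc_subset_Ioc le_rfl (by linarith))
      have hint2 : IntegrableOn (fun t => (k (t+h) - k t)^2) (Ioc (2*h) η) volume :=
        hIinc.mono_set (Ioc_subset_Ioc (by linarith) (by linarith))
      have hint3 : IntegrableOn (fun t => (k (t+h) - k t)^2) (Ioc η T) volume :=
        hIinc.mono_set (Ioc_subset_Ioc hη0.le le_rfl)
      have hintη : IntegrableOn (fun t => (k (t+h) - k t)^2) (Ioc 0 η) volume :=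
        hIinc.mono_set (Ioc_subset_Ioc le_rfl (by linarith))
      have hdisj1 : Disjoint (Ioc (0:ℝ) (2*h)) (Ioc (2*h) η) := by
        rw [Set.disjoint_left]; rintro x ⟨_, h2⟩ ⟨h3, _⟩; linarith
      have hdisj2 : Disjoint (Ioc (0:ℝ) η) (Ioc η T) := by
        rw [Set.disjoint_left]; rintro x ⟨_, h2⟩ ⟨h3, _⟩; linarith
      have hU1 : Ioc (0:ℝ) η = Ioc 0 (2*h) ∪ Ioc (2*h) η :=
        (Ioc_union_Ioc_eq_Ioc (by linarith) h2hη).symm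
      have hU2 : Ioc (0:ℝ) T = Ioc 0 η ∪ Ioc η T :=
        (Ioc_union_Ioc_eq_Ioc hη0.le (by linarith)).symm
      have heq2 : ∫ t in Ioc (0:ℝ) T, (k (t+h) - k t)^2
          = (∫ t in Ioc (0:ℝ) η, (k (t+h) - k t)^2) + ∫ t in Ioc η T, (k (t+h) - k t)^2 := by
        rw [hU2]; exact setIntegral_union hdisj2 measurableSet_Ioc hintη hint3
      have heq1 : ∫ t in Ioc (0:ℝ) η, (k (t+h) - k t)^2
          = (∫ t in Ioc (0:ℝ) (2*h), (k (t+h) - k t)^2)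
            + ∫ t in Ioc (2*h) η, (k (t+h) - k t)^2 := by
        rw [hU1]; exact setIntegral_union hdisj1 measurableSet_Ioc hint1 hint2
      -- J1
      have hIksh2 : IntegrableOn (fun t => (k (t+h))^2) (Ioc 0 (2*h)) volume := by
        apply translate_intg k h (2*h) (by linarith) hh0.le
        exact hI2T.mono_set (Ioc_subset_Ioc hh0.le (by linarith))
      have hIk2h : IntegrableOn (fun t => (k t)^2) (Ioc 0 (2*h)) volume :=
        hI2T.mono_set (Ioc_subset_Ioc le_rfl (by linarith))
      have hg2int : IntegrableOn (fun t => 2*(k (t+h))^2 + 2*(k t)^2) (Ioc 0 (2*h)) volume :=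
        (hIksh2.const_mul 2).add (hIk2h.const_mul 2)
      have hb1 : ∫ t in Ioc (0:ℝ) (2*h), (k (t+h) - k t)^2 ≤ B₁ * h ^ α := by
        have hm1 : ∫ t in Ioc (0:ℝ) (2*h), (k (t+h) - k t)^2
            ≤ ∫ t in Ioc (0:ℝ) (2*h), (2*(k (t+h))^2 + 2*(k t)^2) := by
          refine setIntegral_mono_on hint1 hg2int measurableSet_Ioc (fun t _ => ?_)
          exact sq_sub_le _ _
        have hsplit : ∫ t in Ioc (0:ℝ) (2*h), (2*(k (t+h))^2 + 2*(k t)^2)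
            = 2*(∫ t in Ioc (0:ℝ) (2*h), (k (t+h))^2) + 2*(∫ t in Ioc (0:ℝ) (2*h), (k t)^2) := by
          rw [integral_add (hIksh2.const_mul 2) (hIk2h.const_mul 2),
            MeasureTheory.integral_const_mul, MeasureTheory.integral_const_mul]
        have htr : ∫ t in Ioc (0:ℝ) (2*h), (k (t+h))^2 = ∫ t in Ioc h (2*h+h), (k t)^2 :=
          translate_int k h (2*h) (by linarith)
        have hIk3h : IntegrableOn (fun t => (k t)^2) (Ioc 0 (3*h)) volume :=
          hI2T.mono_set (Ioc_subset_Ioc le_rfl (by linarith))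
        have htr2 : ∫ t in Ioc h (2*h+h), (k t)^2 ≤ ∫ t in Ioc (0:ℝ) (3*h), (k t)^2 := by
          apply setIntegral_mono_set hIk3h
          · exact Filter.Eventually.of_forall (fun t => sq_nonneg _)
          · exact (Ioc_subset_Ioc hh0.le (by linarith)).eventuallyLE
        have hs3 : ∫ t in Ioc (0:ℝ) (3*h), (k t)^2 ≤ C^2/(2*β+1) * (3*h) ^ (2*β+1) :=
          small_int_bound k hcont C δ β hδ0 hβ2 hC.le hkb (3*h) (by linarith) (by linarith)
        have hs2 : ∫ t in Ioc (0:ℝ) (2*h), (k t)^2 ≤ C^2/(2*β+1) * (3*h) ^ (2*β+1) := by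
          refine le_trans (small_int_bound k hcont C δ β hδ0 hβ2 hC.le hkb (2*h)
            (by linarith) (by linarith)) ?_
          apply mul_le_mul_of_nonneg_left ?_ (by positivity)
          exact Real.rpow_le_rpow (by linarith) (by linarith) (by linarith)
        have hpow3 : (3*h) ^ (2*β+1) ≤ 9 * h ^ α := by
          rw [Real.mul_rpow (by norm_num) hh0.le]
          have h9 : (3:ℝ) ^ (2*β+1) ≤ 9 := by
            calc (3:ℝ) ^ (2*β+1) ≤ 3 ^ (2:ℝ) :=
                  Real.rpow_le_rpow_of_exponent_le (by norm_num) (by linarith)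
              _ = 9 := by
                  rw [show (2:ℝ) = ((2:ℕ):ℝ) by norm_num, Real.rpow_natCast]; norm_num
          have hhα : h ^ (2*β+1) ≤ h ^ α :=
            Real.rpow_le_rpow_of_exponent_ge hh0 hsmall1 hαsmall
          calc (3:ℝ) ^ (2*β+1) * h ^ (2*β+1) ≤ 9 * h ^ (2*β+1) :=
                mul_le_mul_of_nonneg_right h9 (Real.rpow_nonneg hh0.le _)
            _ ≤ 9 * h ^ α := mul_le_mul_of_nonneg_left hhα (by norm_num)
        calc ∫ t in Ioc (0:ℝ) (2*h), (k (t+h) - k t)^2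
            ≤ 2*(∫ t in Ioc (0:ℝ) (2*h), (k (t+h))^2) + 2*(∫ t in Ioc (0:ℝ) (2*h), (k t)^2) := by
              rw [← hsplit]; exact hm1
          _ ≤ 2*(C^2/(2*β+1) * (3*h) ^ (2*β+1)) + 2*(C^2/(2*β+1) * (3*h) ^ (2*β+1)) := by
              have := le_trans (le_of_eq htr) (le_trans htr2 hs3)
              gcongr
          _ = 4*(C^2/(2*β+1)) * (3*h) ^ (2*β+1) := by ring
          _ ≤ 4*(C^2/(2*β+1)) * (9 * h ^ α) := by
              apply mul_le_mul_of_nonneg_left hpow3 (by positivity)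
          _ = B₁ * h ^ α := by simp only [hB₁def]; ring
      -- J2
      have hptw2 : ∀ t ∈ Ioc (2*h) η, (k (t+h) - k t)^2 ≤ 81*C^2*h^2 * t ^ (2*β - 2) := by
        intro t ht
        obtain ⟨ht1, ht2⟩ := ht
        have ht0 : 0 < t := lt_trans (by linarith) ht1
        obtain ⟨c, hcmem, hc⟩ := exists_hasDerivAt_eq_slope k (deriv k)
          (show t < t + h by linarith)
          (hcont.mono (fun s hs => lt_of_lt_of_le ht0 hs.1))
          (fun s hs => hder s (lt_trans ht0 hs.1))
        have hcδ' : c ∈ Ioc (0:ℝ) δ' := by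
          refine ⟨lt_trans ht0 hcmem.1, ?_⟩
          have h1 : c < t + h := hcmem.2
          have h2 : t + h ≤ η + a := by linarith
          have h3 : η + a ≤ 2*η := by simp only [hadef]; linarith
          linarith
        have hdcb := hdb c hcδ'
        have hslope : k (t+h) - k t = deriv k c * h := by
          rw [hc, show t + h - t = h by ring, div_mul_cancel₀ _ hh0.ne']
        have hcb : |deriv k c| ≤ 9*C * t ^ (β - 1) := by
          refine le_trans hdcb ?_
          apply mul_le_mul_of_nonneg_left ?_ (by positivity)
          exact Real.rpow_le_rpow_of_nonpos ht0 hcmem.1.le (by linarith)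
        have habs2 : |k (t+h) - k t| ≤ 9*C*t ^ (β-1)*h := by
          rw [hslope, abs_mul, abs_of_pos hh0]
          exact mul_le_mul_of_nonneg_right hcb hh0.le
        have hsq : (k (t+h) - k t)^2 ≤ (9*C*t ^ (β-1)*h)^2 := by
          rw [← sq_abs (k (t+h) - k t)]
          apply pow_le_pow_left₀ (abs_nonneg _) habs2
        have hpowsq : (t ^ (β-1))^2 = t ^ (2*β-2) := by
          rw [sq, ← Real.rpow_add ht0]; congr 1; ring
        calc (k (t+h) - k t)^2 ≤ (9*C*t ^ (β-1)*h)^2 := hsq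
          _ = 81*C^2*h^2*((t ^ (β-1))^2) := by ring
          _ = 81*C^2*h^2 * t ^ (2*β-2) := by rw [hpowsq]
      have hb2 : ∫ t in Ioc (2*h) η, (k (t+h) - k t)^2 ≤ B₂ * h ^ α := by
        have hcrp : ContinuousOn (fun t : ℝ => t ^ (2*β-2)) (Icc (2*h) η) := by
          apply ContinuousOn.rpow_const continuousOn_id
          intro x hx
          exact Or.inl (ne_of_gt (lt_of_lt_of_le (by linarith) hx.1))
        have hgint2 : IntegrableOn (fun t => 81*C^2*h^2 * t ^ (2*β-2)) (Ioc (2*h) η) volume := by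
          apply Integrable.const_mul
          exact (ContinuousOn.integrableOn_compact isCompact_Icc hcrp).mono_set Ioc_subset_Icc_self
        have hm2 := setIntegral_mono_on hint2 hgint2 measurableSet_Ioc hptw2
        have htail := rpow_tail_bound (2*β-2) (2*h) η (by linarith) (by linarith) h2hη
        rw [show 2*β-2+1 = 2*β-1 by ring] at htail
        have hpc : (2*h) ^ (2*β-1) ≤ h ^ (2*β-1) := by
          rw [Real.mul_rpow (by norm_num) hh0.le]
          have h1 : (2:ℝ) ^ (2*β-1) ≤ 1 :=
            Real.rpow_le_one_of_one_le_of_nonpos (by norm_num) (by linarith)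
          calc (2:ℝ) ^ (2*β-1) * h ^ (2*β-1) ≤ 1 * h ^ (2*β-1) :=
                mul_le_mul_of_nonneg_right h1 (Real.rpow_nonneg hh0.le _)
            _ = h ^ (2*β-1) := one_mul _
        have hcomb : h^2 * h ^ (2*β-1) = h ^ (2*β+1) := by
          rw [← Real.rpow_natCast h 2, ← Real.rpow_add hh0]
          congr 1; push_cast; ring
        have hhα : h ^ (2*β+1) ≤ h ^ α :=
          Real.rpow_le_rpow_of_exponent_ge hh0 hsmall1 hαsmall
        calc ∫ t in Ioc (2*h) η, (k (t+h) - k t)^2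
            ≤ ∫ t in Ioc (2*h) η, 81*C^2*h^2 * t ^ (2*β-2) := hm2
          _ = 81*C^2*h^2 * ∫ t in Ioc (2*h) η, t ^ (2*β-2) := MeasureTheory.integral_const_mul _ _
          _ ≤ 81*C^2*h^2 * ((2*h) ^ (2*β-1) / (-(2*β-1))) := by
              apply mul_le_mul_of_nonneg_left htail (by positivity)
          _ ≤ 81*C^2*h^2 * (h ^ (2*β-1) / (-(2*β-1))) := by
              apply mul_le_mul_of_nonneg_left ?_ (by positivity)
              apply div_le_div_of_nonneg_right hpc (by linarith)
          _ = (81*C^2/(-(2*β-1))) * (h^2 * h ^ (2*β-1)) := by ring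
          _ = (81*C^2/(-(2*β-1))) * h ^ (2*β+1) := by rw [hcomb]
          _ ≤ (81*C^2/(-(2*β-1))) * h ^ α := by
              apply mul_le_mul_of_nonneg_left hhα ?_
              apply le_of_lt; apply div_pos (by positivity) (by linarith)
          _ = B₂ * h ^ α := by simp only [hB₂def]
      -- J3
      have hptw3 : ∀ t ∈ Ioc η T, (k (t+h) - k t)^2 ≤ (M'*h)^2 := by
        intro t ht
        obtain ⟨ht1, ht2⟩ := ht
        have ht0 : 0 < t := lt_trans hη0 ht1
        obtain ⟨c, hcmem, hc⟩ := exists_hasDerivAt_eq_slope k (deriv k)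
          (show t < t + h by linarith)
          (hcont.mono (fun s hs => lt_of_lt_of_le ht0 hs.1))
          (fun s hs => hder s (lt_trans ht0 hs.1))
        have hcmem2 : c ∈ Icc η (2*T) := by
          constructor
          · linarith [hcmem.1]
          · have := hcmem.2; linarith
        have hM'c := hM' c hcmem2
        rw [Real.norm_eq_abs] at hM'c
        have hslope : k (t+h) - k t = deriv k c * h := by rw [hc, show t + h - t = h by ring, div_mul_cancel₀ _ hh0.ne']
        have habs3 : |k (t+h) - k t| ≤ M' * h := by
          rw [hslope, abs_mul, abs_of_pos hh0]
          exact mul_le_mul_of_nonneg_right hM'c hh0.le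
        rw [← sq_abs (k (t+h) - k t)]
        exact pow_le_pow_left₀ (abs_nonneg _) habs3 2
      have hb3 : ∫ t in Ioc η T, (k (t+h) - k t)^2 ≤ B₃ * h ^ α := by
        have hcst : IntegrableOn (fun _ : ℝ => (M'*h)^2) (Ioc η T) volume :=
          (integrableOn_const_iff enorm_ne_top).mpr (Or.inr (by rw [Real.volume_Ioc]; exact ENNReal.ofReal_lt_top))
        have hm3 := setIntegral_mono_on hint3 hcst measurableSet_Ioc hptw3
        have hc3 : ∫ _ in Ioc η T, (M'*h)^2 = (T - η) * (M'*h)^2 := by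
          rw [setIntegral_const, measureReal_def, Real.volume_Ioc, ENNReal.toReal_ofReal (by linarith)]
          simp [smul_eq_mul]
        have hh2α : h^2 ≤ h ^ α := by
          rw [← Real.rpow_natCast h 2]
          exact Real.rpow_le_rpow_of_exponent_ge hh0 hsmall1 (by push_cast; linarith)
        calc ∫ t in Ioc η T, (k (t+h) - k t)^2 ≤ (T - η) * (M'*h)^2 := by rw [← hc3]; exact hm3
          _ = (T - η) * M'^2 * h^2 := by ring
          _ ≤ T * M'^2 * h^2 := by
              apply mul_le_mul_of_nonneg_right ?_ (sq_nonneg h)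
              apply mul_le_mul_of_nonneg_right (by linarith) (sq_nonneg M')
          _ ≤ T * M'^2 * h ^ α := by
              apply mul_le_mul_of_nonneg_left hh2α (by positivity)
          _ = B₃ * h ^ α := by simp only [hB₃def]
      calc ∫ t in Ioc (0:ℝ) T, (k (t+h) - k t)^2
          = (∫ t in Ioc (0:ℝ) (2*h), (k (t+h) - k t)^2)
            + (∫ t in Ioc (2*h) η, (k (t+h) - k t)^2)
            + ∫ t in Ioc η T, (k (t+h) - k t)^2 := by rw [heq2, heq1]
        _ ≤ B₁ * h ^ α + B₂ * h ^ α + B₃ * h ^ α := by gcongr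
        _ ≤ (B₁ + B₂ + B₃ + B₄) * h ^ α := by
            have h0 : 0 ≤ B₄ * h ^ α := by positivity
            have hE : (B₁ + B₂ + B₃ + B₄) * h ^ α
                = B₁ * h ^ α + B₂ * h ^ α + B₃ * h ^ α + B₄ * h ^ α := by ring
            linarith [hE.ge]
    · -- LARGE h
      have hm1 : ∫ t in Ioc (0:ℝ) T, (k (t+h) - k t)^2
          ≤ ∫ t in Ioc (0:ℝ) T, (2*(k (t+h))^2 + 2*(k t)^2) := by
        refine setIntegral_mono_on hIinc hgint measurableSet_Ioc (fun t _ => ?_)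
        exact sq_sub_le _ _
      have hsplit : ∫ t in Ioc (0:ℝ) T, (2*(k (t+h))^2 + 2*(k t)^2)
          = 2*(∫ t in Ioc (0:ℝ) T, (k (t+h))^2) + 2*(∫ t in Ioc (0:ℝ) T, (k t)^2) := by
        rw [integral_add (hIksh.const_mul 2) (hIkT.const_mul 2),
          MeasureTheory.integral_const_mul, MeasureTheory.integral_const_mul]
      have htr : ∫ t in Ioc (0:ℝ) T, (k (t+h))^2 = ∫ t in Ioc h (T+h), (k t)^2 :=
        translate_int k h T hT.le
      have htr2 : ∫ t in Ioc h (T+h), (k t)^2 ≤ M₂ := by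
        apply setIntegral_mono_set hI2T
        · exact Filter.Eventually.of_forall (fun t => sq_nonneg _)
        · exact (Ioc_subset_Ioc hh0.le (by linarith)).eventuallyLE
      have htr3 : ∫ t in Ioc (0:ℝ) T, (k t)^2 ≤ M₂ := by
        apply setIntegral_mono_set hI2T
        · exact Filter.Eventually.of_forall (fun t => sq_nonneg _)
        · exact (Ioc_subset_Ioc le_rfl (by linarith)).eventuallyLE
      have haα : a ^ α ≤ h ^ α := Real.rpow_le_rpow ha0.le hha.le hα0.le
      have hap : 0 < a ^ α := Real.rpow_pos_of_pos ha0 α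
      have h4M : 4*M₂ ≤ B₄ * h ^ α := by
        simp only [hB₄def]
        rw [div_mul_eq_mul_div, le_div_iff₀ hap]
        exact mul_le_mul_of_nonneg_left haα (by linarith)
      have hB123 : 0 ≤ (B₁ + B₂ + B₃) * h ^ α := by positivity
      calc ∫ t in Ioc (0:ℝ) T, (k (t+h) - k t)^2
          ≤ 2*(∫ t in Ioc (0:ℝ) T, (k (t+h))^2) + 2*(∫ t in Ioc (0:ℝ) T, (k t)^2) := by
            rw [← hsplit]; exact hm1
        _ ≤ 2*M₂ + 2*M₂ := by rw [htr]; gcongr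
        _ = 4*M₂ := by ring
        _ ≤ B₄ * h ^ α := h4M
        _ ≤ (B₁ + B₂ + B₃ + B₄) * h ^ α := by
            have hE : (B₁ + B₂ + B₃ + B₄) * h ^ α
                = (B₁ + B₂ + B₃) * h ^ α + B₄ * h ^ α := by ring
            linarith [hE.ge, hB123]
  calc (∫ t in Ioc (0:ℝ) h, (k t)^2) + ∫ t in Ioc (0:ℝ) T, (k (t+h) - k t)^2
      ≤ A * h ^ α + (B₁ + B₂ + B₃ + B₄) * h ^ α := add_le_add partA partB
    _ = (A + (B₁ + B₂ + B₃ + B₄)) * h ^ α := by ring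
lemma kbound (k ℓ : ℝ → ℝ) (H ε : ℝ) (hε : 0 < ε)
    (hℓm : Measurable ℓ)
    (hℓpos : ∀ x : ℝ, 0 < x → 0 < ℓ x)
    (hℓsv : ∀ lam : ℝ, 0 < lam → Tendsto (fun t => ℓ (lam * t) / ℓ t) atTop (nhds 1))
    (hreg : Tendsto (fun t => k t / (t ^ (H - 1/2) * ℓ (1/t)))
      (nhdsWithin 0 (Ioi 0)) (nhds 1)) :
    ∃ C > 0, ∃ δ, 0 < δ ∧ δ ≤ 1 ∧ ∀ t ∈ Ioc (0:ℝ) δ, |k t| ≤ C * t ^ (H - 1/2 - ε) := by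
  obtain ⟨C₀, hC₀, X, hX1, hP⟩ := potter ℓ hℓm hℓpos hℓsv ε hε
  have hX0 : (0:ℝ) < X := lt_of_lt_of_le one_pos hX1
  have hev : ∀ᶠ t in nhdsWithin 0 (Ioi 0), |k t / (t ^ (H-1/2) * ℓ (1/t)) - 1| < 1 := by
    have h1 := Metric.tendsto_nhds.mp hreg 1 one_pos
    refine h1.mono (fun t ht => ?_)
    rwa [Real.dist_eq] at ht
  rw [eventually_nhdsWithin_iff, Metric.eventually_nhds_iff] at hev
  obtain ⟨δ₁, hδ₁0, hδ₁⟩ := hev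
  refine ⟨2*C₀, by linarith, min (δ₁/2) (min 1 (1/X)), by positivity,
    le_trans (min_le_right _ _) (min_le_left _ _), fun t ht => ?_⟩
  obtain ⟨ht0, htδ⟩ := ht
  have ht1 : t ≤ 1 := le_trans htδ (le_trans (min_le_right _ _) (min_le_left _ _))
  have htX : t ≤ 1/X := le_trans htδ (le_trans (min_le_right _ _) (min_le_right _ _))
  have htd : dist t 0 < δ₁ := by
    rw [Real.dist_eq, sub_zero, abs_of_pos ht0]
    have := le_trans htδ (min_le_left _ _)
    linarith
  have hrat := hδ₁ htd ht0
  have hinv : X ≤ 1/t := by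
    rw [le_div_iff₀ ht0]
    calc X * t ≤ X * (1/X) := by
          apply mul_le_mul_of_nonneg_left htX hX0.le
      _ = 1 := by field_simp
  have hℓb : ℓ (1/t) ≤ C₀ * (1/t) ^ ε := hP (1/t) hinv
  have hPpos : 0 < t ^ (H-1/2) * ℓ (1/t) :=
    mul_pos (Real.rpow_pos_of_pos ht0 _) (hℓpos _ (by positivity))
  have hratio : |k t| ≤ 2 * (t ^ (H-1/2) * ℓ (1/t)) := by
    have h2 : |k t / (t ^ (H-1/2) * ℓ (1/t))| ≤ 2 := by
      have := abs_sub_abs_le_abs_sub (k t / (t ^ (H-1/2) * ℓ (1/t))) 1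
      rw [abs_one] at this
      linarith
    rw [abs_div, abs_of_pos hPpos] at h2
    rw [div_le_iff₀ hPpos] at h2
    linarith [h2]
  have hpoweq : (1/t) ^ ε = t ^ (-ε) := by
    rw [one_div, ← Real.rpow_neg_one t, ← Real.rpow_mul ht0.le]
    congr 1; ring
  have hfinal : t ^ (H-1/2) * ℓ (1/t) ≤ C₀ * t ^ (H - 1/2 - ε) := by
    have h3 : t ^ (H-1/2) * ℓ (1/t) ≤ t ^ (H-1/2) * (C₀ * t ^ (-ε)) := by
      apply mul_le_mul_of_nonneg_left ?_ (Real.rpow_nonneg ht0.le _)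
      rwa [hpoweq] at hℓb
    refine le_trans h3 (le_of_eq ?_)
    rw [show H - 1/2 - ε = (H - 1/2) + (-ε) by ring, Real.rpow_add ht0]
    ring
  calc |k t| ≤ 2 * (t ^ (H-1/2) * ℓ (1/t)) := hratio
    _ ≤ 2 * (C₀ * t ^ (H - 1/2 - ε)) := by linarith
    _ = 2*C₀ * t ^ (H - 1/2 - ε) := by ring

/-- A measurable function `ℓ`, positive on `(0,∞)`, is slowly varying at infinity if
`ℓ(λ t)/ℓ(t) → 1` as `t → ∞`, for every `λ > 0`. -/
def SlowlyVarying (ℓ : ℝ → ℝ) : Prop :=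
  Measurable ℓ ∧ ∀ lam : ℝ, 0 < lam →
    Filter.Tendsto (fun t => ℓ (lam * t) / ℓ t) Filter.atTop (nhds 1)

/-- The operator (spectral) norm `‖A‖ = sup_{|x| = 1} |A x|` of a real matrix, with
respect to the Euclidean norms. -/
noncomputable def opNorm {n m : ℕ} (A : Matrix (Fin n) (Fin m) ℝ) : ℝ :=
  sSup {r : ℝ | ∃ x : Fin m → ℝ, (∑ i, x i ^ 2) = 1 ∧
    r = Real.sqrt (∑ i, (A.mulVec x i) ^ 2)}

lemma opNorm_diag_sq_le {n : ℕ} (v : Fin (n+1) → ℝ) :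
    (opNorm (Matrix.diagonal v))^2 ≤ ∑ j, v j ^2 := by
  set S := {r : ℝ | ∃ x : Fin (n+1) → ℝ, (∑ i, x i ^ 2) = 1 ∧
    r = Real.sqrt (∑ i, ((Matrix.diagonal v).mulVec x i) ^ 2)} with hS
  have hmem : Real.sqrt (∑ i, ((Matrix.diagonal v).mulVec (Pi.single 0 1) i) ^ 2) ∈ S := by
    refine ⟨Pi.single 0 1, ?_, rfl⟩
    simp [Pi.single_apply]
  have hub : ∀ r ∈ S, r ≤ Real.sqrt (∑ j, v j ^2) := by
    rintro r ⟨x, hx, rfl⟩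
    apply Real.sqrt_le_sqrt
    apply Finset.sum_le_sum
    intro i _
    rw [Matrix.mulVec_diagonal]
    have hxi : x i ^ 2 ≤ 1 := by
      rw [← hx]
      exact Finset.single_le_sum (fun j _ => sq_nonneg (x j)) (Finset.mem_univ i)
    calc (v i * x i)^2 = v i ^2 * x i ^2 := by ring
      _ ≤ v i ^2 * 1 := by nlinarith [sq_nonneg (v i)]
      _ = v i ^2 := mul_one _
  have h1 : opNorm (Matrix.diagonal v) ≤ Real.sqrt (∑ j, v j ^2) :=
    csSup_le ⟨_, hmem⟩ hub
  have h2 : 0 ≤ opNorm (Matrix.diagonal v) := by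
    refine le_trans (Real.sqrt_nonneg _) (le_csSup ⟨Real.sqrt (∑ j, v j ^2), ?_⟩ hmem)
    rintro r hr
    exact hub r hr
  calc (opNorm (Matrix.diagonal v))^2 ≤ (Real.sqrt (∑ j, v j ^2))^2 := by nlinarith
    _ = ∑ j, v j ^2 := Real.sq_sqrt (Finset.sum_nonneg fun j _ => sq_nonneg (v j))

/-- `L²`-increment bounds for a diagonal matrix kernel
`K(t) = diag(k_1(t), …, k_d(t))` whose entries are regularly varying at `0` with indices
`H_j − 1/2`, `H_j ∈ (0,1)`: for every `T > 0` and all sufficiently small `ε > 0` there is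
`C > 0` with `∫_0^h ‖K(t)‖² dt + ∫_0^T ‖K(t+h) − K(t)‖² dt ≤ C h^{2 H_min − 2ε}` for all
`h ∈ (0,T]`. -/
theorem stmt7 (d : ℕ) (k : Fin (d + 1) → ℝ → ℝ) (H : Fin (d + 1) → ℝ)
    (ℓ : Fin (d + 1) → ℝ → ℝ)
    (hH : ∀ j, H j ∈ Ioo (0 : ℝ) 1)
    (hk : ∀ j, ContDiffOn ℝ 1 (k j) (Ioi 0))
    (hmono : ∀ j, ∃ δ > 0,
      MonotoneOn (deriv (k j)) (Ioc 0 δ) ∨ AntitoneOn (deriv (k j)) (Ioc 0 δ))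
    (hℓpos : ∀ j, ∀ x : ℝ, 0 < x → 0 < ℓ j x)
    (hℓsv : ∀ j, SlowlyVarying (ℓ j))
    (hreg : ∀ j, Tendsto (fun t => k j t / (t ^ (H j - 1 / 2) * ℓ j (1 / t)))
      (nhdsWithin 0 (Ioi 0)) (nhds 1))
    (hint : ∀ j, IntegrableOn (fun t => (deriv (k j) t) ^ 2) (Ioi 1)) :
    ∀ T : ℝ, 0 < T → ∃ ε₀ > 0, ∀ ε : ℝ, 0 < ε → ε < ε₀ → ∃ C > 0,
      ∀ h : ℝ, 0 < h → h ≤ T →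
        (∫ t in Ioc (0 : ℝ) h, (opNorm (Matrix.diagonal fun j => k j t)) ^ 2) +
          (∫ t in Ioc (0 : ℝ) T,
            (opNorm (Matrix.diagonal fun j => k j (t + h) - k j t)) ^ 2) ≤
        C * h ^ (2 * Finset.univ.inf' Finset.univ_nonempty H - 2 * ε) := by
  intro T hT
  set Hm := Finset.univ.inf' Finset.univ_nonempty H with hHmdef
  have hHm0 : 0 < Hm := by
    rw [hHmdef, Finset.lt_inf'_iff]
    exact fun j _ => (hH j).1
  have hHmle : ∀ j, Hm ≤ H j := fun j => Finset.inf'_le H (Finset.mem_univ j)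
  refine ⟨Hm, hHm0, fun ε hε0 hεHm => ?_⟩
  have per : ∀ j : Fin (d+1), ∃ D > 0, ∀ h : ℝ, 0 < h → h ≤ T →
      IntegrableOn (fun t => (k j t)^2) (Ioc 0 h) volume ∧
      IntegrableOn (fun t => (k j (t+h) - k j t)^2) (Ioc 0 T) volume ∧
      (∫ t in Ioc (0:ℝ) h, (k j t)^2) + (∫ t in Ioc (0:ℝ) T, (k j (t+h) - k j t)^2)
        ≤ D * h ^ (2*Hm - 2*ε) := by
    intro j
    obtain ⟨δm, hδm, hm⟩ := hmono j
    obtain ⟨C, hC, δ, hδ0, hδ1, hkb⟩ := kbound (k j) (ℓ j) (H j) (ε/2) (by linarith)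
      (hℓsv j).1 (hℓpos j) (hℓsv j).2 (hreg j)
    have hεH : ε < H j := lt_of_lt_of_le hεHm (hHmle j)
    exact component (k j) (H j) ε T (2*Hm - 2*ε) (hH j) (hk j) δm hδm hm hT hε0
      hεH (by linarith) (by linarith [hHmle j]) C δ hC hδ0 hδ1 hkb
  choose D hD hDp using per
  refine ⟨∑ j, D j, Finset.sum_pos (fun j _ => hD j) Finset.univ_nonempty,
    fun h hh0 hhT => ?_⟩
  have hint1 : ∀ j : Fin (d+1), IntegrableOn (fun t => (k j t)^2) (Ioc 0 h) volume :=
    fun j => (hDp j h hh0 hhT).1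
  have hint2 : ∀ j : Fin (d+1),
      IntegrableOn (fun t => (k j (t+h) - k j t)^2) (Ioc 0 T) volume :=
    fun j => (hDp j h hh0 hhT).2.1
  have hsum1 : IntegrableOn (fun t => ∑ j, (k j t)^2) (Ioc 0 h) volume :=
    integrable_finset_sum _ (fun j _ => hint1 j)
  have hsum2 : IntegrableOn (fun t => ∑ j, (k j (t+h) - k j t)^2) (Ioc 0 T) volume :=
    integrable_finset_sum _ (fun j _ => hint2 j)
  have hN1 : ∫ t in Ioc (0:ℝ) h, (opNorm (Matrix.diagonal fun j => k j t))^2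
      ≤ ∫ t in Ioc (0:ℝ) h, ∑ j, (k j t)^2 :=
    integral_mono_of_nonneg (Filter.Eventually.of_forall fun t => sq_nonneg _) hsum1
      (Filter.Eventually.of_forall fun t => opNorm_diag_sq_le _)
  have hN2 : ∫ t in Ioc (0:ℝ) T, (opNorm (Matrix.diagonal fun j => k j (t+h) - k j t))^2
      ≤ ∫ t in Ioc (0:ℝ) T, ∑ j, (k j (t+h) - k j t)^2 :=
    integral_mono_of_nonneg (Filter.Eventually.of_forall fun t => sq_nonneg _) hsum2
      (Filter.Eventually.of_forall fun t => opNorm_diag_sq_le _)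
  have hE1 : ∫ t in Ioc (0:ℝ) h, ∑ j, (k j t)^2
      = ∑ j, ∫ t in Ioc (0:ℝ) h, (k j t)^2 :=
    integral_finset_sum _ (fun j _ => hint1 j)
  have hE2 : ∫ t in Ioc (0:ℝ) T, ∑ j, (k j (t+h) - k j t)^2
      = ∑ j, ∫ t in Ioc (0:ℝ) T, (k j (t+h) - k j t)^2 :=
    integral_finset_sum _ (fun j _ => hint2 j)
  calc (∫ t in Ioc (0 : ℝ) h, (opNorm (Matrix.diagonal fun j => k j t)) ^ 2) +
        (∫ t in Ioc (0 : ℝ) T, (opNorm (Matrix.diagonal fun j => k j (t + h) - k j t)) ^ 2)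
      ≤ (∑ j, ∫ t in Ioc (0:ℝ) h, (k j t)^2)
        + ∑ j, ∫ t in Ioc (0:ℝ) T, (k j (t+h) - k j t)^2 := by
        rw [← hE1, ← hE2]; exact add_le_add hN1 hN2
    _ = ∑ j, ((∫ t in Ioc (0:ℝ) h, (k j t)^2)
        + ∫ t in Ioc (0:ℝ) T, (k j (t+h) - k j t)^2) := by
        rw [Finset.sum_add_distrib]
    _ ≤ ∑ j, D j * h ^ (2*Hm - 2*ε) :=
        Finset.sum_le_sum (fun j _ => (hDp j h hh0 hhT).2.2)
    _ = (∑ j, D j) * h ^ (2*Hm - 2*ε) := by rw [Finset.sum_mul]
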